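/- Equivalence with the proximal point step: with S^β_X = P_sk(exp(βX)) and β₂ > β₁ > 0, the matrix P_sk( S^{β₁}_X ∘ exp((β₂−β₁)X) ) equals S^{β₂}_X. -/

import Mathlib

open Matrix

/-- `P` is the Sinkhorn projection of `X`: a doubly stochastic matrix of the form
`D(r) X D(c)` with positive scaling vectors. -/
def IsSinkhornProj {n : ℕ} (X P : Matrix (Fin n) (Fin n) ℝ) : Prop :=
  ∃ r c : Fin n → ℝ, (∀ i, 0 < r i) ∧ (∀ i, 0 < c i) ∧
    P = Matrix.diagonal r * X * Matrix.diagonal c ∧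
    P ∈ doublyStochastic ℝ (Fin n)

/-- Entrywise exponential of `β • X`. -/
noncomputable def entryExp {n : ℕ} (β : ℝ) (X : Matrix (Fin n) (Fin n) ℝ) :
    Matrix (Fin n) (Fin n) ℝ :=
  Matrix.of fun i j => Real.exp (β * X i j)

/-- Uniqueness of the Sinkhorn projection of an entrywise positive matrix. -/
lemma sinkhorn_unique {n : ℕ} (Y P P' : Matrix (Fin n) (Fin n) ℝ)
    (hY : ∀ i j, 0 < Y i j)
    (hP : IsSinkhornProj Y P) (hP' : IsSinkhornProj Y P') : P = P' := by
  rcases isEmpty_or_nonempty (Fin n) with he | hne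
  · ext i j; exact he.elim i
  obtain ⟨a, b, ha, hb, hPe, hPd⟩ := hP
  obtain ⟨a', b', ha', hb', hPe', hPd'⟩ := hP'
  set u : Fin n → ℝ := fun i => a i / a' i with hu
  set v : Fin n → ℝ := fun j => b j / b' j with hv
  have hupos : ∀ i, 0 < u i := fun i => div_pos (ha i) (ha' i)
  have hvpos : ∀ j, 0 < v j := fun j => div_pos (hb j) (hb' j)
  have hP'ij : ∀ i j, P' i j = a' i * Y i j * b' j := by
    intro i j; simp [hPe', Matrix.mul_diagonal, Matrix.diagonal_mul]
  have hPij : ∀ i j, P i j = u i * v j * P' i j := by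
    intro i j
    rw [hP'ij]
    have h1 : a' i ≠ 0 := (ha' i).ne'
    have h2 : b' j ≠ 0 := (hb' j).ne'
    simp only [hPe, Matrix.mul_diagonal, Matrix.diagonal_mul, hu, hv]
    field_simp
  have hP'pos : ∀ i j, 0 < P' i j := by
    intro i j; rw [hP'ij]
    exact mul_pos (mul_pos (ha' i) (hY i j)) (hb' j)
  have hProw : ∀ i, ∑ j, P i j = 1 := sum_row_of_mem_doublyStochastic hPd
  have hPcol : ∀ j, ∑ i, P i j = 1 := sum_col_of_mem_doublyStochastic hPd
  have hP'row : ∀ i, ∑ j, P' i j = 1 := sum_row_of_mem_doublyStochastic hPd'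
  have hP'col : ∀ j, ∑ i, P' i j = 1 := sum_col_of_mem_doublyStochastic hPd'
  obtain ⟨i₀, -, hi₀⟩ := Finset.exists_max_image Finset.univ u ⟨Classical.arbitrary _, Finset.mem_univ _⟩
  obtain ⟨j₀, -, hj₀⟩ := Finset.exists_min_image Finset.univ v ⟨Classical.arbitrary _, Finset.mem_univ _⟩
  -- Step 1 : 1 ≤ u i₀ * v j₀
  have step1 : 1 ≤ u i₀ * v j₀ := by
    calc (1:ℝ) = ∑ i, P i j₀ := (hPcol j₀).symm
    _ = ∑ i, u i * v j₀ * P' i j₀ := by simp_rw [hPij]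
    _ ≤ ∑ i, u i₀ * v j₀ * P' i j₀ := by
        apply Finset.sum_le_sum
        intro i _
        have := hi₀ i (Finset.mem_univ i)
        have hnn : 0 ≤ v j₀ * P' i j₀ := le_of_lt (mul_pos (hvpos j₀) (hP'pos i j₀))
        calc u i * v j₀ * P' i j₀ = u i * (v j₀ * P' i j₀) := by ring
        _ ≤ u i₀ * (v j₀ * P' i j₀) := mul_le_mul_of_nonneg_right this hnn
        _ = u i₀ * v j₀ * P' i j₀ := by ring
    _ = u i₀ * v j₀ * ∑ i, P' i j₀ := by rw [Finset.mul_sum]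
    _ = u i₀ * v j₀ := by rw [hP'col j₀, mul_one]
  -- Step 2 : u i₀ * S = 1 and v j₀ ≤ S where S = ∑ j, v j * P' i₀ j
  set S : ℝ := ∑ j, v j * P' i₀ j with hS
  have hStep2 : u i₀ * S = 1 := by
    rw [hS, Finset.mul_sum]
    rw [← hProw i₀]
    apply Finset.sum_congr rfl
    intro j _
    rw [hPij]; ring
  have hSge : v j₀ ≤ S := by
    calc v j₀ = v j₀ * ∑ j, P' i₀ j := by rw [hP'row i₀, mul_one]
    _ = ∑ j, v j₀ * P' i₀ j := by rw [Finset.mul_sum]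
    _ ≤ ∑ j, v j * P' i₀ j := by
        apply Finset.sum_le_sum
        intro j _
        exact mul_le_mul_of_nonneg_right (hj₀ j (Finset.mem_univ j)) (hP'pos i₀ j).le
  have hle : u i₀ * v j₀ ≤ 1 := by
    calc u i₀ * v j₀ ≤ u i₀ * S := mul_le_mul_of_nonneg_left hSge (hupos i₀).le
    _ = 1 := hStep2
  have heq : u i₀ * v j₀ = 1 := le_antisymm hle step1
  have hSeq : S = v j₀ := by
    have : u i₀ * S = u i₀ * v j₀ := by rw [hStep2, heq]
    exact mul_left_cancel₀ (hupos i₀).ne' this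
  -- v is constant
  have hvconst : ∀ j, v j = v j₀ := by
    have hsum0 : ∑ j, (v j - v j₀) * P' i₀ j = 0 := by
      have : ∑ j, (v j - v j₀) * P' i₀ j = S - v j₀ := by
        rw [hS]
        rw [Finset.sum_congr rfl (fun j _ => sub_mul (v j) (v j₀) (P' i₀ j)),
          Finset.sum_sub_distrib, ← Finset.mul_sum, hP'row i₀, mul_one]
      rw [this, hSeq, sub_self]
    intro j
    have hnn : ∀ k ∈ Finset.univ, 0 ≤ (v k - v j₀) * P' i₀ k := fun k _ =>
      mul_nonneg (sub_nonneg.2 (hj₀ k (Finset.mem_univ k))) (hP'pos i₀ k).le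
    have := (Finset.sum_eq_zero_iff_of_nonneg hnn).1 hsum0 j (Finset.mem_univ j)
    have h0 : v j - v j₀ = 0 := by
      rcases mul_eq_zero.1 this with h | h
      · exact h
      · exact absurd h (hP'pos i₀ j).ne'
    linarith
  -- u i * v j₀ = 1 for all i
  have huv : ∀ i, u i * v j₀ = 1 := by
    intro i
    have : 1 = u i * v j₀ := by
      calc (1:ℝ) = ∑ j, P i j := (hProw i).symm
      _ = ∑ j, u i * v j₀ * P' i j := by
          apply Finset.sum_congr rfl
          intro j _
          rw [hPij, hvconst j]
      _ = u i * v j₀ * ∑ j, P' i j := by rw [Finset.mul_sum]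
      _ = u i * v j₀ := by rw [hP'row i, mul_one]
    exact this.symm
  ext i j
  rw [hPij, hvconst j]
  have := huv i
  calc u i * v j₀ * P' i j = (u i * v j₀) * P' i j := by ring
  _ = P' i j := by rw [this, one_mul]

/-- Equivalence with the proximal point step: with `S^β_X = P_sk(exp(βX))` and
`β₂ > β₁ > 0`, the matrix `P_sk(S^{β₁}_X ∘ exp((β₂ − β₁)X))` equals `S^{β₂}_X`. -/
theorem stmt9 {n : ℕ} (X : Matrix (Fin n) (Fin n) ℝ) (β₁ β₂ : ℝ)
    (hβ₁ : 0 < β₁) (hβ₁₂ : β₁ < β₂)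
    (S₁ S₂ Q : Matrix (Fin n) (Fin n) ℝ)
    (hS₁ : IsSinkhornProj (entryExp β₁ X) S₁)
    (hS₂ : IsSinkhornProj (entryExp β₂ X) S₂)
    (hQ : IsSinkhornProj (Matrix.hadamard S₁ (entryExp (β₂ - β₁) X)) Q) :
    Q = S₂ := by
  apply sinkhorn_unique (entryExp β₂ X) Q S₂ (fun i j => Real.exp_pos _) _ hS₂
  obtain ⟨r₁, c₁, hr₁, hc₁, hS₁e, -⟩ := hS₁
  obtain ⟨r, c, hr, hc, hQe, hQd⟩ := hQ
  refine ⟨fun i => r i * r₁ i, fun j => c₁ j * c j,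
    fun i => mul_pos (hr i) (hr₁ i), fun j => mul_pos (hc₁ j) (hc j), ?_, hQd⟩
  rw [hQe]
  ext i j
  simp only [Matrix.mul_diagonal, Matrix.diagonal_mul, Matrix.hadamard_apply, hS₁e,
    entryExp, Matrix.of_apply]
  rw [show β₂ * X i j = β₁ * X i j + (β₂ - β₁) * X i j by ring, Real.exp_add]
  ring
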